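/- Let ε > 0, ℓ > 0, u₋ < u₊, and let f : ℝ → ℝ be continuously differentiable on [u₋, u₊]. Set m = min_{[u₋,u₊]} f, M = max_{[u₋,u₊]} f, and c_I = ∫_{u₋}^{u₊} √( (M − f(u)) (f(u) + 2ε − M) ) / (f(u) + ε − M) du (defined when M − m < ε). Then the following are equivalent: (i) there exists a strictly increasing, continuously differentiable function u : [−ℓ,ℓ] → ℝ with u(−ℓ) = u₋, u(ℓ) = u₊, and a constant C ∈ ℝ such that ε u'(x)/√(1 + u'(x)²) = f(u(x)) + C for every x ∈ [−ℓ,ℓ]; (ii) M − m < ε and 2ℓ > c_I. Moreover, when (ii) holds, the strictly increasing solution u (together with its constant C) is unique. -/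

import Mathlib

/-- A strictly increasing C¹ stationary solution of the saturating-diffusion
conservation law on `[−ℓ,ℓ]` with boundary values `u(±ℓ) = u∓`, in the
once-integrated form `ε u'/√(1+(u')²) = f(u) + C`. -/
def IsIncreasingSteadyState (ε ℓ um up : ℝ) (f : ℝ → ℝ) (u : ℝ → ℝ) (C : ℝ) : Prop :=
  StrictMonoOn u (Set.Icc (-ℓ) ℓ) ∧ u (-ℓ) = um ∧ u ℓ = up ∧
  ∃ u' : ℝ → ℝ, ContinuousOn u' (Set.Icc (-ℓ) ℓ) ∧
    (∀ x ∈ Set.Icc (-ℓ) ℓ, HasDerivWithinAt u (u' x) (Set.Icc (-ℓ) ℓ) x) ∧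
    (∀ x ∈ Set.Icc (-ℓ) ℓ,
      ε * u' x / Real.sqrt (1 + (u' x) ^ 2) = f (u x) + C)

open Set Filter Topology intervalIntegral

namespace SSAux

lemma sq1pos (t : ℝ) : 0 < Real.sqrt (1 + t^2) :=
  Real.sqrt_pos.2 (by positivity)

lemma phi_lt {ε : ℝ} (hε : 0 < ε) (t : ℝ) : |ε * t / Real.sqrt (1 + t^2)| < ε := by
  rw [abs_div, abs_of_pos (sq1pos t), div_lt_iff₀ (sq1pos t), abs_mul, abs_of_pos hε]
  have h1 : |t| < Real.sqrt (1 + t^2) := by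
    rw [← Real.sqrt_sq_eq_abs]
    exact Real.sqrt_lt_sqrt (sq_nonneg t) (by linarith)
  nlinarith [abs_nonneg t, sq1pos t]

lemma sqrt_eps_phi {ε : ℝ} (hε : 0 < ε) (t : ℝ) :
    Real.sqrt (ε^2 - (ε * t / Real.sqrt (1 + t^2))^2) = ε / Real.sqrt (1 + t^2) := by
  have h : ε^2 - (ε * t / Real.sqrt (1 + t^2))^2 = (ε / Real.sqrt (1 + t^2))^2 := by
    have hs : Real.sqrt (1 + t^2) ^ 2 = 1 + t^2 := Real.sq_sqrt (by positivity)
    field_simp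
    nlinarith [hs]
  rw [h, Real.sqrt_sq (by positivity)]

lemma phi_inv {ε : ℝ} (hε : 0 < ε) (t : ℝ) :
    (ε * t / Real.sqrt (1 + t^2)) / Real.sqrt (ε^2 - (ε * t / Real.sqrt (1 + t^2))^2) = t := by
  rw [sqrt_eps_phi hε t]
  field_simp

lemma phi_of_F {ε y : ℝ} (hε : 0 < ε) (hy : |y| < ε) :
    ε * (y / Real.sqrt (ε^2 - y^2)) / Real.sqrt (1 + (y / Real.sqrt (ε^2 - y^2))^2) = y := by
  have h2 : 0 < ε^2 - y^2 := by nlinarith [abs_nonneg y, sq_abs y]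
  have hs : 0 < Real.sqrt (ε^2 - y^2) := Real.sqrt_pos.2 h2
  have hss : Real.sqrt (ε^2 - y^2) ^ 2 = ε^2 - y^2 := Real.sq_sqrt h2.le
  have h1 : 1 + (y / Real.sqrt (ε^2 - y^2))^2 = (ε / Real.sqrt (ε^2 - y^2))^2 := by
    rw [div_pow, div_pow, hss]
    field_simp
    ring
  rw [h1, Real.sqrt_sq (by positivity)]
  field_simp

noncomputable def Hg (ε : ℝ) (f : ℝ → ℝ) (C : ℝ) (s : ℝ) : ℝ :=
  Real.sqrt (ε^2 - (f s + C)^2) / (f s + C)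

noncomputable def Tint (ε um up : ℝ) (f : ℝ → ℝ) (C : ℝ) : ℝ := ∫ s in um..up, Hg ε f C s

noncomputable def Xmap (ε ℓ um : ℝ) (f : ℝ → ℝ) (C : ℝ) (v : ℝ) : ℝ :=
  -ℓ + ∫ s in um..v, Hg ε f C s

lemma H_F_mul {ε y : ℝ} (h0 : 0 < y) (h1 : y < ε) :
    Real.sqrt (ε^2 - y^2) / y * (y / Real.sqrt (ε^2 - y^2)) = 1 := by
  have h2 : 0 < ε^2 - y^2 := by nlinarith
  have hs : 0 < Real.sqrt (ε^2 - y^2) := Real.sqrt_pos.2 h2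
  field_simp

lemma H_anti {ε y z : ℝ} (h0 : 0 < y) (hyz : y < z) (hz : z ≤ ε) :
    Real.sqrt (ε^2 - z^2) / z < Real.sqrt (ε^2 - y^2) / y := by
  have hy : 0 < ε^2 - y^2 := by nlinarith
  have hsy : 0 < Real.sqrt (ε^2 - y^2) := Real.sqrt_pos.2 hy
  have hz0 : 0 < z := h0.trans hyz
  calc Real.sqrt (ε^2 - z^2) / z ≤ Real.sqrt (ε^2 - y^2) / z := by
        gcongr
      _ < Real.sqrt (ε^2 - y^2) / y := div_lt_div_of_pos_left hsy h0 hyz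

lemma Hg_nonneg {ε C s : ℝ} {f : ℝ → ℝ} (h : 0 ≤ f s + C) : 0 ≤ Hg ε f C s :=
  div_nonneg (Real.sqrt_nonneg _) h

lemma Hg_pos {ε C s : ℝ} {f : ℝ → ℝ} (h0 : 0 < f s + C) (h1 : f s + C < ε) : 0 < Hg ε f C s :=
  div_pos (Real.sqrt_pos.2 (by nlinarith)) h0

lemma Hg_contOn {ε C um up : ℝ} {f : ℝ → ℝ} (hfc : ContinuousOn f (Icc um up))
    (hpos : ∀ s ∈ Icc um up, 0 < f s + C) : ContinuousOn (Hg ε f C) (Icc um up) := by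
  apply ContinuousOn.div
  · exact Real.continuous_sqrt.comp_continuousOn
      (continuousOn_const.sub (((hfc.add continuousOn_const)).pow 2))
  · exact hfc.add continuousOn_const
  · exact fun s hs => (hpos s hs).ne'

lemma Hg_intInt {ε C um up v w : ℝ} {f : ℝ → ℝ} (hc : ContinuousOn (Hg ε f C) (Icc um up))
    (hv : v ∈ Icc um up) (hw : w ∈ Icc um up) : IntervalIntegrable (Hg ε f C) MeasureTheory.volume v w :=
  (hc.mono (uIcc_subset_Icc hv hw)).intervalIntegrable

lemma Xmap_hasDeriv {ε ℓ C um up v : ℝ} {f : ℝ → ℝ} (hlt : um ≤ up)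
    (hc : ContinuousOn (Hg ε f C) (Icc um up)) (hv : v ∈ Icc um up) :
    HasDerivWithinAt (Xmap ε ℓ um f C) (Hg ε f C v) (Icc um up) v := by
  haveI : Fact (v ∈ Icc um up) := ⟨hv⟩
  have hint : IntervalIntegrable (Hg ε f C) MeasureTheory.volume um v :=
    Hg_intInt hc (left_mem_Icc.2 hlt) hv
  have hmeas : StronglyMeasurableAtFilter (Hg ε f C) (𝓝[Icc um up] v) :=
    ⟨Icc um up, self_mem_nhdsWithin, hc.aestronglyMeasurable measurableSet_Icc⟩
  exact (intervalIntegral.integral_hasDerivWithinAt_right hint hmeas (hc v hv)).const_add (-ℓ)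

lemma Xmap_left {ε ℓ C um : ℝ} {f : ℝ → ℝ} : Xmap ε ℓ um f C um = -ℓ := by
  simp [Xmap]

lemma Xmap_sub {ε ℓ C um up v w : ℝ} {f : ℝ → ℝ} (hc : ContinuousOn (Hg ε f C) (Icc um up))
    (hv : v ∈ Icc um up) (hw : w ∈ Icc um up) :
    Xmap ε ℓ um f C w - Xmap ε ℓ um f C v = ∫ s in v..w, Hg ε f C s := by
  have h1 : IntervalIntegrable (Hg ε f C) MeasureTheory.volume um v :=
    Hg_intInt hc (left_mem_Icc.2 (hv.1.trans hv.2)) hv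
  have h2 : IntervalIntegrable (Hg ε f C) MeasureTheory.volume v w := Hg_intInt hc hv hw
  simp only [Xmap]
  rw [← intervalIntegral.integral_add_adjacent_intervals h1 h2]
  ring

lemma Xmap_strictMono {ε ℓ C um up : ℝ} {f : ℝ → ℝ}
    (hc : ContinuousOn (Hg ε f C) (Icc um up))
    (hpos : ∀ s ∈ Icc um up, 0 < Hg ε f C s) :
    StrictMonoOn (Xmap ε ℓ um f C) (Icc um up) := by
  intro v hv w hw hvw
  have key := Xmap_sub (ε := ε) (ℓ := ℓ) hc hv hw
  have hsub : Icc v w ⊆ Icc um up := Icc_subset_Icc hv.1 hw.2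
  have hp : 0 < ∫ s in v..w, Hg ε f C s :=
    intervalIntegral.integral_pos hvw (hc.mono hsub)
      (fun x hx => (hpos x (hsub ⟨hx.1.le, hx.2⟩)).le)
      ⟨v, ⟨le_refl v, hvw.le⟩, hpos v hv⟩
  linarith

lemma Tint_anti {ε um up C1 C2 : ℝ} {f : ℝ → ℝ} (hab : um < up)
    (hfc : ContinuousOn f (Icc um up)) (h12 : C1 < C2)
    (hpos : ∀ s ∈ Icc um up, 0 < f s + C1) (hle : ∀ s ∈ Icc um up, f s + C2 ≤ ε) :
    Tint ε um up f C2 < Tint ε um up f C1 := by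
  have hpos2 : ∀ s ∈ Icc um up, 0 < f s + C2 := fun s hs => (hpos s hs).trans (by linarith)
  apply intervalIntegral.integral_lt_integral_of_continuousOn_of_le_of_exists_lt hab
    (Hg_contOn hfc hpos2) (Hg_contOn hfc hpos)
  · intro x hx
    have hx' : x ∈ Icc um up := ⟨hx.1.le, hx.2⟩
    exact (H_anti (hpos x hx') (by linarith) (hle x hx')).le
  · refine ⟨um, left_mem_Icc.2 hab.le, ?_⟩
    have h := left_mem_Icc.2 hab.le
    exact H_anti (hpos um h) (by linarith) (hle um h)

lemma cI_eq {ε M um up : ℝ} {f : ℝ → ℝ} :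
    (∫ u in um..up, Real.sqrt ((M - f u) * (f u + 2*ε - M)) / (f u + ε - M))
      = Tint ε um up f (ε - M) := by
  apply intervalIntegral.integral_congr
  intro s _
  show _ = Hg ε f (ε - M) s
  unfold Hg
  rw [show ε^2 - (f s + (ε - M))^2 = (M - f s) * (f s + 2*ε - M) by ring,
    show f s + (ε - M) = f s + ε - M by ring]
lemma deriv_nonneg_of_strictMonoOn {u : ℝ → ℝ} {p q x d : ℝ} (hpq : p < q)
    (hmono : StrictMonoOn u (Icc p q)) (hx : x ∈ Icc p q)
    (hd : HasDerivWithinAt u d (Icc p q) x) : 0 ≤ d := by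
  rw [hasDerivWithinAt_iff_tendsto_slope] at hd
  have hne : (𝓝[Icc p q \ {x}] x).NeBot := by
    rcases lt_or_eq_of_le hx.2 with h | h
    · have hsub : Ioc x q ⊆ Icc p q \ {x} :=
        fun y hy => ⟨⟨hx.1.trans hy.1.le, hy.2⟩, (ne_of_gt hy.1)⟩
      have hcl : x ∈ closure (Ioc x q) := by
        rw [closure_Ioc h.ne]; exact ⟨le_refl x, h.le⟩
      exact (mem_closure_iff_nhdsWithin_neBot.1 hcl).mono (nhdsWithin_mono x hsub)
    · have hpx : p < x := h ▸ hpq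
      have hsub : Ico p x ⊆ Icc p q \ {x} :=
        fun y hy => ⟨⟨hy.1, hy.2.le.trans (h ▸ le_refl x)⟩, ne_of_lt hy.2⟩
      have hcl : x ∈ closure (Ico p x) := by
        rw [closure_Ico hpx.ne]; exact ⟨hpx.le, le_refl x⟩
      exact (mem_closure_iff_nhdsWithin_neBot.1 hcl).mono (nhdsWithin_mono x hsub)
  have hev : ∀ y ∈ Icc p q \ {x}, 0 ≤ slope u x y := by
    intro y hy
    rcases lt_or_gt_of_ne hy.2 with h | h
    · rw [slope_def_field]
      have h1 : u y - u x ≤ 0 := sub_nonpos.2 (hmono.monotoneOn hy.1 hx h.le)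
      have h2 : y - x < 0 := by linarith
      exact div_nonneg_of_nonpos h1 h2.le
    · rw [slope_def_field]
      apply div_nonneg
      · exact sub_nonneg.2 (hmono.monotoneOn hx hy.1 h.le)
      · linarith
  exact ge_of_tendsto hd (eventually_nhdsWithin_of_forall hev)

lemma const_of_selfbound {p q s0 K : ℝ} {u u' : ℝ → ℝ}
    (hcont : ContinuousOn u (Icc p q))
    (hder : ∀ x ∈ Icc p q, HasDerivWithinAt u (u' x) (Icc p q) x)
    (hbound : ∀ x ∈ Icc p q, ‖u' x‖ ≤ K * ‖u x - s0‖)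
    (hinit : u p = s0) : ∀ x ∈ Icc p q, u x = s0 := by
  have h := norm_le_gronwallBound_of_norm_deriv_right_le (f := fun x => u x - s0) (f' := u')
    (δ := 0) (K := K) (ε := 0) (a := p) (b := q)
    (hcont.sub continuousOn_const)
    (fun x hx => ((hder x (Ico_subset_Icc_self hx)).sub_const s0).mono_of_mem_nhdsWithin
      (Icc_mem_nhdsGE_of_mem hx))
    (by simp [hinit]) (fun x hx => by simpa using hbound x (Ico_subset_Icc_self hx))
  intro x hx
  have h2 := h x hx
  rw [gronwallBound_ε0_δ0] at h2
  have h3 : ‖u x - s0‖ ≤ 0 := h2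
  have := le_antisymm h3 (norm_nonneg _)
  rwa [norm_eq_zero, sub_eq_zero] at this
lemma forward_analysis
    {ε ℓ um up : ℝ} (hε : 0 < ε) (hℓ : 0 < ℓ) (hlt : um < up)
    {f : ℝ → ℝ} (hf : ContDiffOn ℝ 1 f (Icc um up))
    {u : ℝ → ℝ} {C : ℝ}
    (hmono : StrictMonoOn u (Icc (-ℓ) ℓ)) (hul : u (-ℓ) = um) (hur : u ℓ = up)
    {u' : ℝ → ℝ}
    (hu'deriv : ∀ x ∈ Icc (-ℓ) ℓ, HasDerivWithinAt u (u' x) (Icc (-ℓ) ℓ) x)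
    (heq : ∀ x ∈ Icc (-ℓ) ℓ, ε * u' x / Real.sqrt (1 + (u' x)^2) = f (u x) + C) :
    (∀ s ∈ Icc um up, 0 < f s + C ∧ f s + C < ε) ∧
    (∀ x ∈ Icc (-ℓ) ℓ, Xmap ε ℓ um f C (u x) = x) ∧
    Tint ε um up f C = 2 * ℓ := by
  have hll : -ℓ < ℓ := by linarith
  have hfc : ContinuousOn f (Icc um up) := hf.continuousOn
  have hucont : ContinuousOn u (Icc (-ℓ) ℓ) := fun x hx => (hu'deriv x hx).continuousWithinAt
  have hmaps : MapsTo u (Icc (-ℓ) ℓ) (Icc um up) := by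
    intro x hx
    exact ⟨hul ▸ hmono.monotoneOn (left_mem_Icc.2 hll.le) hx hx.1,
           hur ▸ hmono.monotoneOn hx (right_mem_Icc.2 hll.le) hx.2⟩
  have hsurj : Icc um up ⊆ u '' Icc (-ℓ) ℓ := by
    have := intermediate_value_Icc hll.le hucont
    rwa [hul, hur] at this
  have habs : ∀ x ∈ Icc (-ℓ) ℓ, |f (u x) + C| < ε := by
    intro x hx; rw [← heq x hx]; exact phi_lt hε (u' x)
  have hFu : ∀ x ∈ Icc (-ℓ) ℓ, u' x = (f (u x) + C) / Real.sqrt (ε^2 - (f (u x) + C)^2) := by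
    intro x hx
    conv_rhs => rw [← heq x hx]
    exact (phi_inv hε (u' x)).symm
  have hu'nn : ∀ x ∈ Icc (-ℓ) ℓ, 0 ≤ u' x := fun x hx =>
    deriv_nonneg_of_strictMonoOn hll hmono hx (hu'deriv x hx)
  have hynn : ∀ x ∈ Icc (-ℓ) ℓ, 0 ≤ f (u x) + C := by
    intro x hx; rw [← heq x hx]
    exact div_nonneg (mul_nonneg hε.le (hu'nn x hx)) (Real.sqrt_nonneg _)
  have hglt : ∀ s ∈ Icc um up, f s + C < ε := by
    intro s hs
    obtain ⟨x, hx, rfl⟩ := hsurj hs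
    exact (abs_lt.1 (habs x hx)).2
  have hgnn : ∀ s ∈ Icc um up, 0 ≤ f s + C := by
    intro s hs; obtain ⟨x, hx, rfl⟩ := hsurj hs; exact hynn x hx
  have hud : UniqueDiffOn ℝ (Icc um up) := uniqueDiffOn_Icc hlt
  obtain ⟨L, hL⟩ :=
    isCompact_Icc.exists_bound_of_continuousOn (hf.continuousOn_derivWithin hud le_rfl)
  have hlip : LipschitzOnWith (Real.toNNReal L) f (Icc um up) := by
    apply (convex_Icc um up).lipschitzOnWith_of_nnnorm_derivWithin_le (hf.differentiableOn one_ne_zero)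
    intro x hx
    have h1 : ‖derivWithin f (Icc um up) x‖ ≤ L := hL x hx
    have h2 : L ≤ (Real.toNNReal L : ℝ) := Real.le_coe_toNNReal L
    exact_mod_cast h1.trans h2
  set K : ℝ := (Real.toNNReal L : ℝ) with hKdef
  have hK0 : 0 ≤ K := NNReal.coe_nonneg _
  have hgpos : ∀ s ∈ Icc um up, 0 < f s + C := by
    by_contra hcon
    push_neg at hcon
    obtain ⟨s0, hs0, hs0le⟩ := hcon
    have hs0eq : f s0 + C = 0 := le_antisymm hs0le (hgnn s0 hs0)
    obtain ⟨x0, hx0, hux0⟩ := hsurj hs0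
    obtain ⟨sM, hsM, hmax⟩ := isCompact_Icc.exists_isMaxOn (nonempty_Icc.2 hlt.le) hfc
    set yM := f sM + C with hyMdef
    have hyM0 : 0 ≤ yM := hgnn sM hsM
    have hyMε : yM < ε := hglt sM hsM
    set ρ := Real.sqrt (ε^2 - yM^2) with hρ
    have hρpos : 0 < ρ := Real.sqrt_pos.2 (by nlinarith)
    have hbound : ∀ x ∈ Icc (-ℓ) ℓ, ‖u' x‖ ≤ (K/ρ) * ‖u x - s0‖ := by
      intro x hx
      have hy0 := hynn x hx
      have hyM' : f (u x) + C ≤ yM := by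
        have := isMaxOn_iff.1 hmax (u x) (hmaps hx)
        simp only [hyMdef]; linarith
      have hsq : ρ ≤ Real.sqrt (ε^2 - (f (u x) + C)^2) := by
        apply Real.sqrt_le_sqrt; nlinarith
      have hnum : f (u x) + C ≤ K * ‖u x - s0‖ := by
        have h2 := hlip.dist_le_mul (u x) (hmaps hx) s0 hs0
        rw [Real.dist_eq, Real.dist_eq] at h2
        calc f (u x) + C = f (u x) - f s0 := by linarith
          _ ≤ |f (u x) - f s0| := le_abs_self _
          _ ≤ K * |u x - s0| := h2
          _ = K * ‖u x - s0‖ := by rw [Real.norm_eq_abs]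
      rw [hFu x hx, Real.norm_eq_abs, abs_of_nonneg (div_nonneg hy0 (Real.sqrt_nonneg _))]
      calc (f (u x) + C) / Real.sqrt (ε^2 - (f (u x) + C)^2)
          ≤ (f (u x) + C) / ρ := div_le_div_of_nonneg_left hy0 hρpos hsq
        _ ≤ (K * ‖u x - s0‖) / ρ := by gcongr
        _ = (K/ρ) * ‖u x - s0‖ := by ring
    rcases lt_or_eq_of_le hx0.2 with hx0lt | hx0eq
    · have hsub : Icc x0 ℓ ⊆ Icc (-ℓ) ℓ := Icc_subset_Icc hx0.1 le_rfl
      have hconst := const_of_selfbound (p := x0) (q := ℓ) (K := K/ρ) (s0 := s0)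
        (hucont.mono hsub)
        (fun x hx => (hu'deriv x (hsub hx)).mono hsub)
        (fun x hx => hbound x (hsub hx)) hux0
      have h1 : u ℓ = s0 := hconst ℓ (right_mem_Icc.2 hx0.2)
      have h2 := hmono hx0 (right_mem_Icc.2 hll.le) hx0lt
      rw [hux0, h1] at h2; exact lt_irrefl _ h2
    · set w : ℝ → ℝ := fun y => u (2*ℓ - y) with hw
      set w' : ℝ → ℝ := fun y => u' (2*ℓ - y) * (-1) with hw'
      have hmapsw : ∀ y ∈ Icc ℓ (3*ℓ), (2*ℓ - y) ∈ Icc (-ℓ) ℓ :=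
        fun y hy => ⟨by linarith [hy.2], by linarith [hy.1]⟩
      have hwder : ∀ y ∈ Icc ℓ (3*ℓ), HasDerivWithinAt w (w' y) (Icc ℓ (3*ℓ)) y := by
        intro y hy
        have hgd : HasDerivWithinAt (fun y : ℝ => 2*ℓ - y) (-1 : ℝ) (Icc ℓ (3*ℓ)) y := by
          simpa using (hasDerivWithinAt_id y (Icc ℓ (3*ℓ))).const_sub (2*ℓ)
        exact HasDerivWithinAt.comp y (hu'deriv _ (hmapsw y hy)) hgd (fun z hz => hmapsw z hz)
      have hwcont : ContinuousOn w (Icc ℓ (3*ℓ)) := fun y hy => (hwder y hy).continuousWithinAt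
      have hwinit : w ℓ = s0 := by
        simp only [hw]
        rw [show 2*ℓ - ℓ = ℓ by ring, ← hx0eq, hux0]
      have hconst := const_of_selfbound (p := ℓ) (q := 3*ℓ) (K := K/ρ) (s0 := s0)
        hwcont hwder
        (fun y hy => by
          simp only [hw', hw]
          rw [norm_mul]
          simpa using hbound _ (hmapsw y hy)) hwinit
      have h1 : u (-ℓ) = s0 := by
        have := hconst (3*ℓ) (right_mem_Icc.2 (by linarith))
        simpa [hw, show 2*ℓ - 3*ℓ = -ℓ by ring] using this
      have h2' : u ℓ = s0 := by rw [← hx0eq, hux0]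
      have h3 := hmono (left_mem_Icc.2 hll.le) (right_mem_Icc.2 hll.le) hll
      rw [h1, h2'] at h3; exact lt_irrefl _ h3
  have hHc : ContinuousOn (Hg ε f C) (Icc um up) := Hg_contOn hfc hgpos
  have hXu : ∀ x ∈ Icc (-ℓ) ℓ, Xmap ε ℓ um f C (u x) = x := by
    have key := eq_of_has_deriv_right_eq (a := -ℓ) (b := ℓ)
      (f := fun x => Xmap ε ℓ um f C (u x)) (g := id) (f' := fun _ => (1:ℝ))
      (fun x hx => by
        have hx' := Ico_subset_Icc_self hx
        have hchain := HasDerivWithinAt.comp x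
          (Xmap_hasDeriv (ℓ := ℓ) hlt.le hHc (hmaps hx')) (hu'deriv x hx') hmaps
        have hone : Hg ε f C (u x) * u' x = 1 := by
          rw [hFu x hx']
          exact H_F_mul (hgpos _ (hmaps hx')) (hglt _ (hmaps hx'))
        rw [hone] at hchain
        simp only [Function.comp_def] at hchain
        exact hchain.mono_of_mem_nhdsWithin (Icc_mem_nhdsGE_of_mem hx))
      (fun x hx => hasDerivWithinAt_id x (Ici x))
      (fun x hx => ((Xmap_hasDeriv (ℓ := ℓ) hlt.le hHc (hmaps hx)).continuousWithinAt).comp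
        (hucont x hx) hmaps)
      continuousOn_id
      (by show Xmap ε ℓ um f C (u (-ℓ)) = id (-ℓ); rw [hul, Xmap_left]; rfl)
    exact fun x hx => key x hx
  refine ⟨fun s hs => ⟨hgpos s hs, hglt s hs⟩, hXu, ?_⟩
  have h1 := hXu ℓ (right_mem_Icc.2 hll.le)
  rw [hur] at h1
  have h2 : Xmap ε ℓ um f C up = -ℓ + Tint ε um up f C := rfl
  rw [h2] at h1
  linarith
lemma logint {Kr δ ρ c h : ℝ} (hK : 0 < Kr) (hδ : 0 < δ) (hh : 0 < h) :
    ∫ s in c..(c+h), ρ / (Kr*(s-c)+δ) = (ρ/Kr) * (Real.log (Kr*h+δ) - Real.log δ) := by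
  have hpos : ∀ s ∈ uIcc c (c+h), 0 < Kr*(s-c)+δ := by
    intro s hs
    rw [uIcc_of_le (by linarith)] at hs
    nlinarith [hs.1]
  have hderiv : ∀ s ∈ uIcc c (c+h), HasDerivAt
      (fun s => (ρ/Kr) * Real.log (Kr*(s-c)+δ)) (ρ / (Kr*(s-c)+δ)) s := by
    intro s hs
    have h1 : HasDerivAt (fun s : ℝ => Kr*(s-c)+δ) Kr s := by
      simpa using (((hasDerivAt_id s).sub_const c).const_mul Kr).add_const δ
    have h2 := h1.log (hpos s hs).ne'
    have h3 := h2.const_mul (ρ/Kr)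
    refine h3.congr_deriv ?_
    rw [div_mul_div_comm, mul_comm ρ Kr, mul_div_mul_left _ _ hK.ne']
  have hcont : IntervalIntegrable (fun s => ρ / (Kr*(s-c)+δ))
      MeasureTheory.volume c (c+h) := by
    apply ContinuousOn.intervalIntegrable
    exact ContinuousOn.div continuousOn_const (by fun_prop) (fun s hs => (hpos s hs).ne')
  rw [intervalIntegral.integral_eq_sub_of_hasDerivAt hderiv hcont]
  have e1 : Kr*((c+h)-c)+δ = Kr*h+δ := by ring
  have e2 : Kr*(c-c)+δ = δ := by ring
  simp only [e1, e2]
  ring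

lemma logint' {Kr δ ρ c h : ℝ} (hK : 0 < Kr) (hδ : 0 < δ) (hh : 0 < h) :
    ∫ s in c..(c+h), ρ / (Kr*((c+h)-s)+δ) = (ρ/Kr) * (Real.log (Kr*h+δ) - Real.log δ) := by
  have key := intervalIntegral.integral_comp_sub_left (a := c) (b := c + h)
    (fun s => ρ / (Kr*(s-c)+δ)) (2*c+h)
  have e1 : (2*c+h) - (c+h) = c := by ring
  have e2 : (2*c+h) - c = c + h := by ring
  rw [e1, e2] at key
  calc ∫ s in c..(c+h), ρ / (Kr*((c+h)-s)+δ)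
      = ∫ s in c..(c+h), ρ / (Kr*((2*c+h) - s - c)+δ) := by
        apply intervalIntegral.integral_congr; intro s _
        show ρ / (Kr*((c+h)-s)+δ) = ρ / (Kr*((2*c+h) - s - c)+δ)
        have : Kr*((2*c+h) - s - c)+δ = Kr*((c+h)-s)+δ := by ring
        rw [this]
    _ = ∫ s in c..(c+h), ρ / (Kr*(s-c)+δ) := key
    _ = _ := logint hK hδ hh
lemma Tint_lower
    {ε ℓ um up m M Kr δ : ℝ} {f : ℝ → ℝ} (hε : 0 < ε) (hℓ : 0 < ℓ) (hlt : um < up)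
    (hfc : ContinuousOn f (Icc um up))
    (hKr : 0 < Kr) (hlip : ∀ s ∈ Icc um up, ∀ t ∈ Icc um up, |f s - f t| ≤ Kr * |s - t|)
    {s0 : ℝ} (hs0 : s0 ∈ Icc um up) (hfs0 : f s0 = m)
    (hmle : ∀ s ∈ Icc um up, m ≤ f s) (hMle : ∀ s ∈ Icc um up, f s ≤ M)
    (hMm : M - m < ε) (hδ0 : 0 < δ) (hδ1 : δ ≤ (ε - (M - m))/2)
    (hδ2 : δ ≤ Kr * ((up - um)/2) *
      Real.exp (-(2*ℓ) * Kr / Real.sqrt (ε * (ε - (M-m)) / 2))) :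
    2 * ℓ ≤ Tint ε um up f (δ - m) := by
  have hκ : 0 < ε - (M - m) := by linarith
  have hmM : m ≤ M := by
    have := hmle s0 hs0; have := hMle s0 hs0; linarith
  set ρ : ℝ := Real.sqrt (ε * (ε - (M-m)) / 2) with hρdef
  have hρ : 0 < ρ := Real.sqrt_pos.2 (by positivity)
  set h : ℝ := (up - um)/2 with hhdef
  have hh : 0 < h := by simp only [hhdef]; linarith
  -- basic bounds on g s := f s + (δ - m)
  have hgδ : ∀ s ∈ Icc um up, δ ≤ f s + (δ - m) := by
    intro s hs; have := hmle s hs; linarith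
  have hgub : ∀ s ∈ Icc um up, f s + (δ - m) ≤ ε - (ε - (M-m))/2 := by
    intro s hs; have := hMle s hs; linarith
  have hnum : ∀ s ∈ Icc um up, ρ ≤ Real.sqrt (ε^2 - (f s + (δ - m))^2) := by
    intro s hs
    apply Real.sqrt_le_sqrt
    have h1 := hgδ s hs
    have h2 := hgub s hs
    nlinarith [hδ0, hκ, hε]
  have hgpos : ∀ s ∈ Icc um up, 0 < f s + (δ - m) :=
    fun s hs => lt_of_lt_of_le hδ0 (hgδ s hs)
  have hHc : ContinuousOn (Hg ε f (δ - m)) (Icc um up) := Hg_contOn hfc hgpos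
  -- pick subinterval and model integrand
  obtain ⟨c, hcum, hcup, φ, hφcont, hφle, hφval⟩ :
      ∃ c, um ≤ c ∧ c + h ≤ up ∧
        (∃ φ : ℝ → ℝ, ContinuousOn φ (Icc c (c+h)) ∧
          (∀ s ∈ Icc c (c+h), φ s ≤ Hg ε f (δ - m) s) ∧
          (∫ s in c..(c+h), φ s) = (ρ/Kr) * (Real.log (Kr*h+δ) - Real.log δ)) := by
    have hmain : ∀ (c : ℝ) (d : ℝ → ℝ), um ≤ c → c + h ≤ up →
        (∀ s ∈ Icc c (c+h), 0 ≤ d s ∧ f s + (δ - m) ≤ Kr * d s + δ) →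
        ∀ s ∈ Icc c (c+h), ρ / (Kr * d s + δ) ≤ Hg ε f (δ - m) s := by
      intro c d hc1 hc2 hd s hs
      have hsmem : s ∈ Icc um up := ⟨hc1.trans hs.1, hs.2.trans hc2⟩
      obtain ⟨hd0, hdub⟩ := hd s hs
      have hg0 := hgpos s hsmem
      have hD0 : 0 < Kr * d s + δ := by nlinarith
      calc ρ / (Kr * d s + δ) ≤ ρ / (f s + (δ - m)) :=
            div_le_div_of_nonneg_left hρ.le hg0 hdub
        _ ≤ Real.sqrt (ε^2 - (f s + (δ - m))^2) / (f s + (δ - m)) := by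
            gcongr
            exact hnum s hsmem
        _ = Hg ε f (δ - m) s := rfl
    rcases le_or_gt s0 ((um+up)/2) with hcase | hcase
    · refine ⟨s0, hs0.1, by simp only [hhdef]; linarith, fun s => ρ/(Kr*(s-s0)+δ), ?_, ?_, ?_⟩
      · apply ContinuousOn.div continuousOn_const (by fun_prop)
        intro s hs
        have : 0 ≤ s - s0 := by linarith [hs.1]
        nlinarith
      · apply hmain s0 (fun s => s - s0) hs0.1 (by simp only [hhdef]; linarith)
        intro s hs
        have hs1 : 0 ≤ s - s0 := by linarith [hs.1]
        refine ⟨hs1, ?_⟩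
        have hsmem : s ∈ Icc um up := ⟨hs0.1.trans hs.1, hs.2.trans (by simp only [hhdef]; linarith)⟩
        have := hlip s hsmem s0 hs0
        have habs := (abs_le.1 this).2
        rw [abs_of_nonneg hs1] at habs
        have : f s - f s0 ≤ Kr * (s - s0) := by
          calc f s - f s0 ≤ |f s - f s0| := le_abs_self _
            _ ≤ Kr * |s - s0| := by simpa using hlip s hsmem s0 hs0
            _ = Kr * (s - s0) := by rw [abs_of_nonneg hs1]
        rw [hfs0] at this
        linarith
      · exact logint hKr hδ0 hh
    · have hch : (s0 - h) + h = s0 := by ring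
      refine ⟨s0 - h, by simp only [hhdef]; linarith [hs0.2], by rw [hch]; exact hs0.2,
        fun s => ρ/(Kr*(((s0-h)+h)-s)+δ), ?_, ?_, ?_⟩
      · apply ContinuousOn.div continuousOn_const (by fun_prop)
        intro s hs
        have : 0 ≤ ((s0-h)+h) - s := by linarith [hs.2]
        nlinarith
      · apply hmain (s0 - h) (fun s => ((s0-h)+h) - s)
          (by simp only [hhdef]; linarith [hs0.2]) (by rw [hch]; exact hs0.2)
        intro s hs
        have hs1 : 0 ≤ ((s0-h)+h) - s := by linarith [hs.2]
        refine ⟨hs1, ?_⟩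
        have hsmem : s ∈ Icc um up :=
          ⟨le_trans (by simp only [hhdef]; linarith [hs0.2]) hs.1, by linarith [hs.2, hs0.2]⟩
        have : f s - f s0 ≤ Kr * (((s0-h)+h) - s) := by
          calc f s - f s0 ≤ |f s - f s0| := le_abs_self _
            _ ≤ Kr * |s - s0| := by simpa using hlip s hsmem s0 hs0
            _ = Kr * (((s0-h)+h) - s) := by
                rw [show |s - s0| = s0 - s by rw [abs_of_nonpos (by linarith [hs.2])]; ring]
                rw [hch]
        rw [hfs0] at this
        linarith
      · exact logint' hKr hδ0 hh
  have hchle : c ≤ c + h := by linarith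
  have hcmem : c ∈ Icc um up := ⟨hcum, by linarith⟩
  have hchmem : c + h ∈ Icc um up := ⟨by linarith, hcup⟩
  have hφint : IntervalIntegrable φ MeasureTheory.volume c (c+h) :=
    (hφcont.mono (by rw [uIcc_of_le hchle])).intervalIntegrable
  have hHgint : IntervalIntegrable (Hg ε f (δ-m)) MeasureTheory.volume c (c+h) :=
    Hg_intInt hHc hcmem hchmem
  have step1 : (∫ s in c..(c+h), φ s) ≤ ∫ s in c..(c+h), Hg ε f (δ-m) s :=
    intervalIntegral.integral_mono_on hchle hφint hHgint hφle
  have step2 : (∫ s in c..(c+h), Hg ε f (δ-m) s) ≤ Tint ε um up f (δ-m) := by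
    apply intervalIntegral.integral_mono_interval hcum hchle hcup
    · exact MeasureTheory.ae_restrict_of_forall_mem measurableSet_Ioc
        (fun s hs => Hg_nonneg (hgpos s ⟨hs.1.le, hs.2⟩).le)
    · exact Hg_intInt hHc (left_mem_Icc.2 hlt.le) (right_mem_Icc.2 hlt.le)
  have h1 : δ * Real.exp (2*ℓ*Kr/ρ) ≤ Kr*h := by
    have h2 : Real.exp (-(2*ℓ) * Kr / ρ) = (Real.exp (2*ℓ*Kr/ρ))⁻¹ := by
      rw [← Real.exp_neg]; congr 1; ring
    rw [h2] at hδ2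
    calc δ * Real.exp (2*ℓ*Kr/ρ)
        ≤ (Kr*h * (Real.exp (2*ℓ*Kr/ρ))⁻¹) * Real.exp (2*ℓ*Kr/ρ) :=
          mul_le_mul_of_nonneg_right hδ2 (Real.exp_nonneg _)
      _ = Kr*h := by field_simp
  have hlog : 2*ℓ*Kr/ρ ≤ Real.log (Kr*h+δ) - Real.log δ := by
    have h2 : Real.log (δ * Real.exp (2*ℓ*Kr/ρ)) ≤ Real.log (Kr*h+δ) :=
      Real.log_le_log (by positivity) (by linarith)
    rw [Real.log_mul hδ0.ne' (Real.exp_ne_zero _), Real.log_exp] at h2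
    linarith
  have hval : 2*ℓ ≤ (ρ/Kr) * (Real.log (Kr*h+δ) - Real.log δ) := by
    have h3 : (ρ/Kr) * (2*ℓ*Kr/ρ) ≤ (ρ/Kr) * (Real.log (Kr*h+δ) - Real.log δ) :=
      mul_le_mul_of_nonneg_left hlog (by positivity)
    have h4 : (ρ/Kr) * (2*ℓ*Kr/ρ) = 2*ℓ := by field_simp
    linarith
  linarith [step1, step2, hval, hφval.ge, hφval.le]
lemma Tint_contOn {ε um up m δ Cmax : ℝ} {f : ℝ → ℝ} (hlt : um ≤ up)
    (hfc : ContinuousOn f (Icc um up)) (hδ : 0 < δ)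
    (hlb : ∀ C ∈ Icc (δ - m) Cmax, ∀ s ∈ Icc um up, δ ≤ f s + C) :
    ContinuousOn (Tint ε um up f) (Icc (δ - m) Cmax) := by
  set fext : ℝ → ℝ := fun s => f ((projIcc um up hlt s) : ℝ) with hfextdef
  have hfextc : Continuous fext :=
    (continuousOn_iff_continuous_restrict.1 hfc).comp continuous_projIcc
  have hfext_eq : ∀ s ∈ Icc um up, fext s = f s := by
    intro s hs
    simp only [hfextdef, projIcc_of_mem hlt hs]
  set Fc : ℝ → ℝ → ℝ :=
    fun C s => Real.sqrt (ε^2 - (fext s + C)^2) / max (fext s + C) δ with hFcdef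
  have hFcont : Continuous (Function.uncurry Fc) := by
    apply Continuous.div
    · apply Real.continuous_sqrt.comp
      exact continuous_const.sub
        (((hfextc.comp continuous_snd).add continuous_fst).pow 2)
    · exact ((hfextc.comp continuous_snd).add continuous_fst).max continuous_const
    · intro p
      exact (lt_of_lt_of_le hδ (le_max_right _ _)).ne'
  have hTc : Continuous fun C => ∫ s in um..up, Fc C s :=
    intervalIntegral.continuous_parametric_intervalIntegral_of_continuous' hFcont um up
  apply hTc.continuousOn.congr
  intro C hC
  apply intervalIntegral.integral_congr
  intro s hs
  rw [uIcc_of_le hlt] at hs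
  show Hg ε f C s = Fc C s
  simp only [hFcdef, Hg, hfext_eq s hs]
  rw [max_eq_left (hlb C hC s hs)]
lemma exists_solution {ε ℓ um up C : ℝ} {f : ℝ → ℝ} (hε : 0 < ε) (hℓ : 0 < ℓ) (hlt : um < up)
    (hfc : ContinuousOn f (Icc um up))
    (hgpos : ∀ s ∈ Icc um up, 0 < f s + C) (hglt : ∀ s ∈ Icc um up, f s + C < ε)
    (hT : Tint ε um up f C = 2 * ℓ) :
    ∃ u : ℝ → ℝ, StrictMonoOn u (Icc (-ℓ) ℓ) ∧ u (-ℓ) = um ∧ u ℓ = up ∧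
      ∃ u' : ℝ → ℝ, ContinuousOn u' (Icc (-ℓ) ℓ) ∧
        (∀ x ∈ Icc (-ℓ) ℓ, HasDerivWithinAt u (u' x) (Icc (-ℓ) ℓ) x) ∧
        (∀ x ∈ Icc (-ℓ) ℓ, ε * u' x / Real.sqrt (1 + (u' x)^2) = f (u x) + C) := by
  have hll : -ℓ < ℓ := by linarith
  have hHc : ContinuousOn (Hg ε f C) (Icc um up) := Hg_contOn hfc hgpos
  have hHpos : ∀ s ∈ Icc um up, 0 < Hg ε f C s := fun s hs => Hg_pos (hgpos s hs) (hglt s hs)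
  set X := Xmap ε ℓ um f C with hXdef
  have hXder : ∀ v ∈ Icc um up, HasDerivWithinAt X (Hg ε f C v) (Icc um up) v :=
    fun v hv => Xmap_hasDeriv hlt.le hHc hv
  have hXcont : ContinuousOn X (Icc um up) := fun v hv => (hXder v hv).continuousWithinAt
  have hXmono : StrictMonoOn X (Icc um up) := Xmap_strictMono hHc hHpos
  have hXum : X um = -ℓ := Xmap_left
  have hXup : X up = ℓ := by
    have h0 : X up = -ℓ + Tint ε um up f C := rfl
    rw [h0, hT]; ring
  have hXmaps : MapsTo X (Icc um up) (Icc (-ℓ) ℓ) := by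
    intro v hv
    constructor
    · rw [← hXum]; exact hXmono.monotoneOn (left_mem_Icc.2 hlt.le) hv hv.1
    · rw [← hXup]; exact hXmono.monotoneOn hv (right_mem_Icc.2 hlt.le) hv.2
  have hXsurj : Icc (-ℓ) ℓ ⊆ X '' Icc um up := by
    have := intermediate_value_Icc hlt.le hXcont
    rwa [hXum, hXup] at this
  haveI : CompactSpace (Icc um up) := isCompact_iff_compactSpace.mp isCompact_Icc
  set E : Icc um up → Icc (-ℓ) ℓ := fun v => ⟨X v, hXmaps v.2⟩ with hEdef
  have hEcont : Continuous E :=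
    Continuous.subtype_mk (continuousOn_iff_continuous_restrict.1 hXcont) _
  have hEbij : Function.Bijective E := by
    constructor
    · intro v w hvw
      have h1 : X v = X w := congrArg Subtype.val hvw
      exact Subtype.ext (hXmono.injOn v.2 w.2 h1)
    · rintro ⟨x, hx⟩
      obtain ⟨v, hv, hXv⟩ := hXsurj hx
      exact ⟨⟨v, hv⟩, Subtype.ext hXv⟩
  set Eqv := Equiv.ofBijective E hEbij with hEqvdef
  have hEqcont : Continuous ⇑Eqv := hEcont
  set homeo := Continuous.homeoOfEquivCompactToT2 (f := Eqv) hEqcont with hhomeodef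
  set u : ℝ → ℝ := fun x => ((homeo.symm (projIcc (-ℓ) ℓ hll.le x)) : ℝ) with hudef
  have hucontG : Continuous u :=
    continuous_subtype_val.comp (homeo.symm.continuous.comp continuous_projIcc)
  have huval : ∀ x ∈ Icc (-ℓ) ℓ, X (u x) = x ∧ u x ∈ Icc um up := by
    intro x hx
    have h1 : projIcc (-ℓ) ℓ hll.le x = ⟨x, hx⟩ := projIcc_of_mem hll.le hx
    have h2 : homeo (homeo.symm (projIcc (-ℓ) ℓ hll.le x)) = projIcc (-ℓ) ℓ hll.le x :=
      homeo.apply_symm_apply _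
    have hux : u x = ((homeo.symm ⟨x, hx⟩ : Icc um up) : ℝ) := by
      simp only [hudef, h1]
    constructor
    · have h3 := congrArg Subtype.val h2
      rw [h1] at h3
      rw [hux]
      exact h3
    · exact (homeo.symm (projIcc (-ℓ) ℓ hll.le x)).2
  have hXuinv : ∀ x ∈ Icc (-ℓ) ℓ, X (u x) = x := fun x hx => (huval x hx).1
  have humem : ∀ x ∈ Icc (-ℓ) ℓ, u x ∈ Icc um up := fun x hx => (huval x hx).2
  have humono : StrictMonoOn u (Icc (-ℓ) ℓ) := by
    intro x hx y hy hxy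
    by_contra hcon
    push_neg at hcon
    have h1 := hXmono.monotoneOn (humem y hy) (humem x hx) hcon
    rw [hXuinv x hx, hXuinv y hy] at h1
    linarith
  have hul : u (-ℓ) = um := by
    apply hXmono.injOn (humem _ (left_mem_Icc.2 hll.le)) (left_mem_Icc.2 hlt.le)
    rw [hXuinv _ (left_mem_Icc.2 hll.le), hXum]
  have hur : u ℓ = up := by
    apply hXmono.injOn (humem _ (right_mem_Icc.2 hll.le)) (right_mem_Icc.2 hlt.le)
    rw [hXuinv _ (right_mem_Icc.2 hll.le), hXup]
  set u' : ℝ → ℝ := fun x => (f (u x) + C) / Real.sqrt (ε^2 - (f (u x) + C)^2) with hu'def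
  have hsqpos : ∀ x ∈ Icc (-ℓ) ℓ, 0 < Real.sqrt (ε^2 - (f (u x) + C)^2) := by
    intro x hx
    have h1 := hgpos _ (humem x hx)
    have h2 := hglt _ (humem x hx)
    exact Real.sqrt_pos.2 (by nlinarith)
  have hu'cont : ContinuousOn u' (Icc (-ℓ) ℓ) := by
    have hfu : ContinuousOn (fun x => f (u x) + C) (Icc (-ℓ) ℓ) :=
      (hfc.comp hucontG.continuousOn humem).add continuousOn_const
    apply ContinuousOn.div hfu
    · exact Real.continuous_sqrt.comp_continuousOn (continuousOn_const.sub (hfu.pow 2))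
    · exact fun x hx => (hsqpos x hx).ne'
  have huderiv : ∀ x ∈ Icc (-ℓ) ℓ, HasDerivWithinAt u (u' x) (Icc (-ℓ) ℓ) x := by
    intro x hx
    have hvmem := humem x hx
    have hXv : X (u x) = x := hXuinv x hx
    have hHgpos : 0 < Hg ε f C (u x) := hHpos _ hvmem
    have hFinv : u' x = (Hg ε f C (u x))⁻¹ := by
      simp only [hu'def, Hg, inv_div]
    rw [hasDerivWithinAt_iff_tendsto_slope, hFinv]
    have hXslope : Tendsto (slope X (u x)) (𝓝[Icc um up \ {u x}] (u x))
        (𝓝 (Hg ε f C (u x))) := by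
      have h1 := hXder (u x) hvmem
      rwa [hasDerivWithinAt_iff_tendsto_slope] at h1
    have hinv := hXslope.inv₀ hHgpos.ne'
    have htends : Tendsto u (𝓝[Icc (-ℓ) ℓ \ {x}] x) (𝓝[Icc um up \ {u x}] (u x)) := by
      rw [tendsto_nhdsWithin_iff]
      constructor
      · exact (hucontG.tendsto x).mono_left nhdsWithin_le_nhds
      · apply eventually_nhdsWithin_of_forall
        intro y hy
        refine ⟨humem y hy.1, fun hcon => hy.2 ?_⟩
        have h1 := congrArg X hcon
        rwa [hXuinv y hy.1, hXv] at h1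
    have hcomp := hinv.comp htends
    apply hcomp.congr'
    apply eventually_nhdsWithin_of_forall
    intro y hy
    show (slope X (u x) (u y))⁻¹ = slope u x y
    rw [slope_def_field, slope_def_field, hXuinv y hy.1, hXv, inv_div]
  refine ⟨u, humono, hul, hur, u', hu'cont, huderiv, ?_⟩
  intro x hx
  have h1 := hgpos _ (humem x hx)
  have h2 := hglt _ (humem x hx)
  have habs : |f (u x) + C| < ε := abs_lt.2 ⟨by linarith, h2⟩
  simpa only [hu'def] using phi_of_F hε habs
lemma exists_lip {um up : ℝ} {f : ℝ → ℝ} (hlt : um < up)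
    (hf : ContDiffOn ℝ 1 f (Icc um up)) :
    ∃ Kr : ℝ, 0 < Kr ∧ ∀ s ∈ Icc um up, ∀ t ∈ Icc um up, |f s - f t| ≤ Kr * |s - t| := by
  have hud : UniqueDiffOn ℝ (Icc um up) := uniqueDiffOn_Icc hlt
  obtain ⟨L, hL⟩ :=
    isCompact_Icc.exists_bound_of_continuousOn (hf.continuousOn_derivWithin hud le_rfl)
  have hlip : LipschitzOnWith (Real.toNNReal L) f (Icc um up) := by
    apply (convex_Icc um up).lipschitzOnWith_of_nnnorm_derivWithin_le (hf.differentiableOn one_ne_zero)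
    intro x hx
    have h1 : ‖derivWithin f (Icc um up) x‖ ≤ L := hL x hx
    have h2 : L ≤ (Real.toNNReal L : ℝ) := Real.le_coe_toNNReal L
    exact_mod_cast h1.trans h2
  refine ⟨(Real.toNNReal L : ℝ) + 1, by positivity, ?_⟩
  intro s hs t ht
  have h2 := hlip.dist_le_mul s hs t ht
  rw [Real.dist_eq, Real.dist_eq] at h2
  nlinarith [abs_nonneg (s - t)]
end SSAux

/-- existence and uniqueness of the increasing steady state:
a strictly increasing C¹ solution of `ε u'/√(1+(u')²) = f(u) + C` on `[−ℓ,ℓ]` with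
`u(−ℓ)=u₋`, `u(ℓ)=u₊` exists iff `M − m < ε` and `2ℓ > c_I`; in that case it is unique. -/
theorem increasing_steady_state_iff
    (ε ℓ um up : ℝ) (hε : 0 < ε) (hℓ : 0 < ℓ) (hlt : um < up)
    (f : ℝ → ℝ) (hf : ContDiffOn ℝ 1 f (Set.Icc um up))
    (m M : ℝ)
    (hm : IsLeast (f '' Set.Icc um up) m)
    (hM : IsGreatest (f '' Set.Icc um up) M) :
    ((∃ u : ℝ → ℝ, ∃ C : ℝ, IsIncreasingSteadyState ε ℓ um up f u C) ↔
      (M - m < ε ∧ 2 * ℓ > ∫ u in um..up,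
        Real.sqrt ((M - f u) * (f u + 2 * ε - M)) / (f u + ε - M))) ∧
    ((M - m < ε ∧ 2 * ℓ > ∫ u in um..up,
        Real.sqrt ((M - f u) * (f u + 2 * ε - M)) / (f u + ε - M)) →
      ∀ u₁ C₁ u₂ C₂, IsIncreasingSteadyState ε ℓ um up f u₁ C₁ →
        IsIncreasingSteadyState ε ℓ um up f u₂ C₂ →
        Set.EqOn u₁ u₂ (Set.Icc (-ℓ) ℓ) ∧ C₁ = C₂) := by
  have hll : -ℓ < ℓ := by linarith
  have hfc : ContinuousOn f (Set.Icc um up) := hf.continuousOn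
  obtain ⟨s0, hs0, hfs0⟩ := hm.1
  have hmle : ∀ s ∈ Set.Icc um up, m ≤ f s := fun s hs => hm.2 ⟨s, hs, rfl⟩
  obtain ⟨sM, hsM, hfsM⟩ := hM.1
  have hMle : ∀ s ∈ Set.Icc um up, f s ≤ M := fun s hs => hM.2 ⟨s, hs, rfl⟩
  have fwd : ∀ (u : ℝ → ℝ) (C : ℝ), IsIncreasingSteadyState ε ℓ um up f u C →
      (∀ s ∈ Set.Icc um up, 0 < f s + C ∧ f s + C < ε) ∧
      (∀ x ∈ Set.Icc (-ℓ) ℓ, SSAux.Xmap ε ℓ um f C (u x) = x) ∧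
      SSAux.Tint ε um up f C = 2 * ℓ := by
    rintro u C ⟨humono, hul, hur, u', hu'c, hu'd, heq⟩
    exact SSAux.forward_analysis hε hℓ hlt hf humono hul hur hu'd heq
  constructor
  · constructor
    · rintro ⟨u, C, hsol⟩
      obtain ⟨hbounds, hXu, hT⟩ := fwd u C hsol
      have h1 := hbounds s0 hs0
      have h2 := hbounds sM hsM
      rw [hfs0] at h1
      rw [hfsM] at h2
      refine ⟨by linarith [h1.1, h2.2], ?_⟩
      rw [SSAux.cI_eq (ε := ε) (M := M)]
      have hClt : C < ε - M := by linarith [h2.2]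
      have hanti := SSAux.Tint_anti (ε := ε) hlt hfc hClt (fun s hs => (hbounds s hs).1)
        (fun s hs => by have := hMle s hs; linarith)
      rw [hT] at hanti
      exact hanti
    · rintro ⟨hMm, hcI⟩
      rw [SSAux.cI_eq (ε := ε) (M := M)] at hcI
      obtain ⟨Kr, hKr, hlip⟩ := SSAux.exists_lip hlt hf
      set δ := min ((ε - (M-m))/2)
        (Kr * ((up - um)/2) * Real.exp (-(2*ℓ) * Kr / Real.sqrt (ε * (ε - (M-m)) / 2)))
        with hδdef
      have hδ0 : 0 < δ :=
        lt_min (by linarith) (mul_pos (mul_pos hKr (by linarith)) (Real.exp_pos _))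
      have hTlow := SSAux.Tint_lower hε hℓ hlt hfc hKr hlip hs0 hfs0 hmle hMle hMm hδ0
        (min_le_left _ _) (min_le_right _ _)
      have hC1lt : δ - m < ε - M := by
        have := min_le_left ((ε - (M-m))/2)
          (Kr * ((up - um)/2) * Real.exp (-(2*ℓ) * Kr / Real.sqrt (ε * (ε - (M-m)) / 2)))
        linarith
      have hTcont := SSAux.Tint_contOn (ε := ε) (m := m) (Cmax := ε - M) hlt.le hfc hδ0
        (fun C hC s hs => by have := hmle s hs; have := hC.1; linarith)
      have hsub := intermediate_value_Icc' hC1lt.le hTcont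
      have hmem : 2*ℓ ∈ Set.Icc (SSAux.Tint ε um up f (ε - M)) (SSAux.Tint ε um up f (δ - m)) :=
        ⟨by linarith [hcI], hTlow⟩
      obtain ⟨C, hCmem, hTC⟩ := hsub hmem
      have hCne : C ≠ ε - M := by
        intro h
        rw [h] at hTC
        linarith [hcI]
      have hClt : C < ε - M := lt_of_le_of_ne hCmem.2 hCne
      have hgpos : ∀ s ∈ Set.Icc um up, 0 < f s + C := by
        intro s hs
        have := hmle s hs
        have := hCmem.1
        linarith [hδ0]
      have hglt : ∀ s ∈ Set.Icc um up, f s + C < ε := by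
        intro s hs
        have := hMle s hs
        linarith
      obtain ⟨u, h1, h2, h3, u', h4, h5, h6⟩ :=
        SSAux.exists_solution hε hℓ hlt hfc hgpos hglt hTC
      exact ⟨u, C, h1, h2, h3, u', h4, h5, h6⟩
  · rintro ⟨hMm, hcI⟩ u₁ C₁ u₂ C₂ hsol₁ hsol₂
    obtain ⟨hb₁, hX₁, hT₁⟩ := fwd u₁ C₁ hsol₁
    obtain ⟨hb₂, hX₂, hT₂⟩ := fwd u₂ C₂ hsol₂
    have hCeq : C₁ = C₂ := by
      by_contra hne
      rcases lt_or_gt_of_ne hne with h | h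
      · have := SSAux.Tint_anti hlt hfc h (fun s hs => (hb₁ s hs).1)
          (fun s hs => (hb₂ s hs).2.le)
        rw [hT₁, hT₂] at this; linarith
      · have := SSAux.Tint_anti hlt hfc h (fun s hs => (hb₂ s hs).1)
          (fun s hs => (hb₁ s hs).2.le)
        rw [hT₁, hT₂] at this; linarith
    subst hCeq
    refine ⟨?_, rfl⟩
    intro x hx
    obtain ⟨hmono₁, hul₁, hur₁, -⟩ := hsol₁
    obtain ⟨hmono₂, hul₂, hur₂, -⟩ := hsol₂
    have hmem₁ : u₁ x ∈ Set.Icc um up :=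
      ⟨hul₁ ▸ hmono₁.monotoneOn (Set.left_mem_Icc.2 hll.le) hx hx.1,
       hur₁ ▸ hmono₁.monotoneOn hx (Set.right_mem_Icc.2 hll.le) hx.2⟩
    have hmem₂ : u₂ x ∈ Set.Icc um up :=
      ⟨hul₂ ▸ hmono₂.monotoneOn (Set.left_mem_Icc.2 hll.le) hx hx.1,
       hur₂ ▸ hmono₂.monotoneOn hx (Set.right_mem_Icc.2 hll.le) hx.2⟩
    have hXmono := SSAux.Xmap_strictMono (ε := ε) (ℓ := ℓ)
      (SSAux.Hg_contOn hfc (fun s hs => (hb₁ s hs).1))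
      (fun s hs => SSAux.Hg_pos (hb₁ s hs).1 (hb₁ s hs).2)
    apply hXmono.injOn hmem₁ hmem₂
    rw [hX₁ x hx, hX₂ x hx]
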